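/- Let d ≥ 1 and let f : ℝ^d → ℂ be measurable, not almost everywhere zero, and exponentially decaying: there is a constant C > 0 with |f(x)| ≤ C·e^{−‖x‖/C} for almost every x ∈ ℝ^d. Define its Fourier transform by (𝓕f)(ξ) := ∫_{ℝ^d} e^{−i⟨ξ,x⟩} f(x) dx. Then the zero set {ξ ∈ ℝ^d : (𝓕f)(ξ) = 0} has empty interior; equivalently, 𝓕f does not vanish identically on any nonempty open subset of ℝ^d, so the support of 𝓕f is all of ℝ^d. -/

import Mathlib

open MeasureTheory

open scoped FourierTransform RealInnerProductSpace SchwartzMap ContDiff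

namespace Stmt4Aux

lemma pow_mul_exp_le (n : ℕ) {a t : ℝ} (ha : 0 < a) (ht : 0 ≤ t) :
    (1 + t) ^ n * Real.exp (-(a * t)) ≤ n.factorial * Real.exp a / a ^ n := by
  have h1 : (a * (1 + t)) ^ n / n.factorial ≤ Real.exp (a * (1 + t)) :=
    Real.pow_div_factorial_le_exp (x := a * (1 + t)) (by positivity) n
  rw [div_le_iff₀ (by positivity : (0:ℝ) < (n.factorial : ℝ))] at h1
  rw [mul_pow, mul_add, mul_one, Real.exp_add] at h1
  rw [le_div_iff₀ (by positivity : (0:ℝ) < a ^ n)]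
  have h2 := mul_le_mul_of_nonneg_right h1 (Real.exp_pos (-(a * t))).le
  calc (1 + t) ^ n * Real.exp (-(a * t)) * a ^ n
      = a ^ n * (1 + t) ^ n * Real.exp (-(a * t)) := by ring
    _ ≤ Real.exp a * Real.exp (a * t) * (n.factorial : ℝ) * Real.exp (-(a * t)) := h2
    _ = (n.factorial : ℝ) * Real.exp a * (Real.exp (a * t) * Real.exp (-(a * t))) := by ring
    _ = (n.factorial : ℝ) * Real.exp a := by
        rw [← Real.exp_add, add_neg_cancel, Real.exp_zero, mul_one]

lemma integrable_pow_mul_exp (d : ℕ) (k : ℕ) {a : ℝ} (ha : 0 < a) :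
    Integrable (fun x : EuclideanSpace ℝ (Fin d) => ‖x‖ ^ k * Real.exp (-(a * ‖x‖)))
      (volume : Measure (EuclideanSpace ℝ (Fin d))) := by
  have hd : (Module.finrank ℝ (EuclideanSpace ℝ (Fin d)) : ℝ) < ((d : ℝ) + 1) := by
    rw [finrank_euclideanSpace_fin]; linarith
  have hint : Integrable (fun x : EuclideanSpace ℝ (Fin d) => (1 + ‖x‖) ^ (-((d : ℝ) + 1)))
      (volume : Measure (EuclideanSpace ℝ (Fin d))) := integrable_one_add_norm hd
  set M : ℝ := ((k + d + 1).factorial : ℝ) * Real.exp a / a ^ (k + d + 1) with hM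
  refine (hint.const_mul M).mono' ?_ ?_
  · exact (Continuous.aestronglyMeasurable (by fun_prop))
  · filter_upwards with x
    have ht : (0:ℝ) ≤ ‖x‖ := norm_nonneg x
    have h1t : (0:ℝ) < 1 + ‖x‖ := by linarith
    rw [Real.norm_eq_abs, abs_of_nonneg (by positivity)]
    have hcast : ((d : ℝ) + 1) = ((d + 1 : ℕ) : ℝ) := by push_cast; ring
    rw [hcast, Real.rpow_neg h1t.le, Real.rpow_natCast, ← div_eq_mul_inv,
      le_div_iff₀ (by positivity)]
    have hxk : ‖x‖ ^ k ≤ (1 + ‖x‖) ^ k := pow_le_pow_left₀ ht (by linarith) k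
    calc ‖x‖ ^ k * Real.exp (-(a * ‖x‖)) * (1 + ‖x‖) ^ (d + 1)
        ≤ (1 + ‖x‖) ^ k * Real.exp (-(a * ‖x‖)) * (1 + ‖x‖) ^ (d + 1) :=
          mul_le_mul_of_nonneg_right
            (mul_le_mul_of_nonneg_right hxk (Real.exp_pos _).le) (by positivity)
      _ = (1 + ‖x‖) ^ (k + (d + 1)) * Real.exp (-(a * ‖x‖)) := by
          rw [pow_add]; ring
      _ ≤ ((k + (d + 1)).factorial : ℝ) * Real.exp a / a ^ (k + (d + 1)) :=
          pow_mul_exp_le _ ha ht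
      _ = M := by rw [hM]; norm_num [add_assoc]

lemma integrable_decay {d : ℕ} {f : EuclideanSpace ℝ (Fin d) → ℂ} (hmeas : Measurable f)
    {C : ℝ} (hC : 0 < C)
    (hdecay : ∀ᵐ x ∂(volume : Measure (EuclideanSpace ℝ (Fin d))),
      ‖f x‖ ≤ C * Real.exp (-‖x‖ / C))
    (k : ℕ) {b : ℝ} (hb : b < 1 / C) (g : EuclideanSpace ℝ (Fin d) → ℂ)
    (hg : AEStronglyMeasurable g (volume : Measure (EuclideanSpace ℝ (Fin d))))
    (hgle : ∀ x, ‖g x‖ ≤ ‖x‖ ^ k * Real.exp (b * ‖x‖)) :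
    Integrable (fun x => g x * f x) (volume : Measure (EuclideanSpace ℝ (Fin d))) := by
  have ha : 0 < 1 / C - b := by linarith
  refine ((integrable_pow_mul_exp d k ha).const_mul C).mono'
    (hg.mul hmeas.aestronglyMeasurable) ?_
  filter_upwards [hdecay] with x hx
  have h1 : ‖g x * f x‖ ≤ (‖x‖ ^ k * Real.exp (b * ‖x‖)) * (C * Real.exp (-‖x‖ / C)) := by
    rw [norm_mul]
    exact mul_le_mul (hgle x) hx (norm_nonneg _) (by positivity)
  refine h1.trans (le_of_eq ?_)
  have harg : Real.exp (b * ‖x‖) * Real.exp (-(‖x‖ / C)) = Real.exp (-((1 / C - b) * ‖x‖)) := by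
    rw [← Real.exp_add]
    congr 1
    field_simp
    ring
  rw [← harg]
  ring

end Stmt4Aux

open Stmt4Aux

set_option maxHeartbeats 1000000 in
/-- The Fourier transform of a (nontrivial) exponentially decaying function does not vanish
on any nonempty open set: its zero set has empty interior. -/
theorem stmt_4 (d : ℕ) (hd : 1 ≤ d) (f : EuclideanSpace ℝ (Fin d) → ℂ)
    (hmeas : Measurable f) (hne : ¬ f =ᵐ[volume] 0)
    (C : ℝ) (hC : 0 < C)
    (hdecay : ∀ᵐ x ∂(volume : Measure (EuclideanSpace ℝ (Fin d))),
      ‖f x‖ ≤ C * Real.exp (-‖x‖ / C)) :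
    interior {ξ : EuclideanSpace ℝ (Fin d) |
      (∫ x, Complex.exp (-Complex.I * ((inner ℝ ξ x : ℝ) : ℂ)) * f x) = 0} = ∅ := by
  set F : EuclideanSpace ℝ (Fin d) → ℂ := fun ξ => ∫ x, Complex.exp (-Complex.I * ((inner ℝ ξ x : ℝ) : ℂ)) * f x with hF
  by_contra hcon
  rw [← Ne, ← Set.nonempty_iff_ne_empty] at hcon
  obtain ⟨ξ₀, hξ₀⟩ := hcon
  rw [mem_interior_iff_mem_nhds, Metric.mem_nhds_iff] at hξ₀
  obtain ⟨r, hr, hball⟩ := hξ₀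
  have hball' : ∀ η : EuclideanSpace ℝ (Fin d), η ∈ Metric.ball ξ₀ r → F η = 0 := fun η hη => hball hη
  -- basic integrability of f
  have hf_int : Integrable f (volume : Measure (EuclideanSpace ℝ (Fin d))) := by
    have := integrable_decay hmeas hC hdecay 0 (b := 0) (by positivity)
      (fun _ => (1:ℂ)) aestronglyMeasurable_const
      (fun x => by simp)
    simpa using this
  -- Step 1: F vanishes identically.
  have hFzero : ∀ ξ : EuclideanSpace ℝ (Fin d), F ξ = 0 := by
    intro ξ
    set v : EuclideanSpace ℝ (Fin d) := ξ - ξ₀ with hv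
    by_cases hv0 : v = 0
    · have : ξ = ξ₀ := by rwa [sub_eq_zero] at hv0
      rw [this]
      exact hball' _ (Metric.mem_ball_self hr)
    have hnv : 0 < ‖v‖ := norm_pos_iff.2 hv0
    set δ : ℝ := (4 * C * ‖v‖)⁻¹ with hδdef
    have hδ : 0 < δ := by positivity
    set S : Set ℂ := {z : ℂ | |z.im| < 2 * δ} with hSdef
    set e : ℂ → EuclideanSpace ℝ (Fin d) → ℂ := fun z x =>
      Complex.exp (-Complex.I * (((inner ℝ ξ₀ x : ℝ) : ℂ) + z * ((inner ℝ v x : ℝ) : ℂ))) with he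
    set g : ℂ → ℂ := fun z => ∫ x, e z x * f x with hg
    -- norm of the exponential kernel
    have hnorm : ∀ (z : ℂ) (x : EuclideanSpace ℝ (Fin d)), ‖e z x‖ = Real.exp (z.im * (inner ℝ v x : ℝ)) := by
      intro z x
      rw [he]
      simp only [Complex.norm_exp]
      congr 1
      simp [Complex.mul_re, Complex.add_im, Complex.mul_im]
    -- the kernel is continuous in x for fixed z
    have hecont : ∀ z : ℂ, Continuous (fun x : EuclideanSpace ℝ (Fin d) => e z x) := by
      intro z
      apply Complex.continuous_exp.comp
      apply Continuous.mul continuous_const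
      apply Continuous.add
      · exact Complex.continuous_ofReal.comp (continuous_const.inner continuous_id)
      · exact continuous_const.mul
          (Complex.continuous_ofReal.comp (continuous_const.inner continuous_id))
    -- pointwise bound on the kernel in the strip
    have hkerbound : ∀ (b : ℝ) (z : ℂ), |z.im| * ‖v‖ ≤ b → ∀ x : EuclideanSpace ℝ (Fin d),
        ‖e z x‖ ≤ ‖x‖ ^ 0 * Real.exp (b * ‖x‖) := by
      intro b z hz x
      rw [hnorm, pow_zero, one_mul]
      apply Real.exp_le_exp.2
      calc z.im * (inner ℝ v x : ℝ) ≤ |z.im * (inner ℝ v x : ℝ)| := le_abs_self _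
        _ = |z.im| * |(inner ℝ v x : ℝ)| := abs_mul _ _
        _ ≤ |z.im| * (‖v‖ * ‖x‖) :=
            mul_le_mul_of_nonneg_left (abs_real_inner_le_norm v x) (abs_nonneg _)
        _ = (|z.im| * ‖v‖) * ‖x‖ := by ring
        _ ≤ b * ‖x‖ := by gcongr
    -- integrability of the integrand in the strip
    have hF_int : ∀ z : ℂ, |z.im| < 3 * δ → Integrable (fun x => e z x * f x)
        (volume : Measure (EuclideanSpace ℝ (Fin d))) := by
      intro z hz
      have hb : |z.im| * ‖v‖ < 1 / C := by
        rw [hδdef] at hz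
        have h3 : 3 * (4 * C * ‖v‖)⁻¹ * ‖v‖ < 1 / C := by
          rw [mul_inv, mul_inv]
          field_simp
          nlinarith [hnv, hC]
        calc |z.im| * ‖v‖ < 3 * (4 * C * ‖v‖)⁻¹ * ‖v‖ := by gcongr
          _ < 1 / C := h3
      exact integrable_decay hmeas hC hdecay 0 hb _ (hecont z).aestronglyMeasurable
        (hkerbound _ z le_rfl)
    -- differentiability of g on the strip
    have hg_deriv : ∀ z₀ : ℂ, z₀ ∈ S → DifferentiableAt ℂ g z₀ := by
      intro z₀ hz₀
      rw [hSdef, Set.mem_setOf_eq] at hz₀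
      have hb : (3 : ℝ) * δ * ‖v‖ < 1 / C := by
        rw [hδdef, mul_inv, mul_inv]
        field_simp
        nlinarith [hnv, hC]
      have key := hasDerivAt_integral_of_dominated_loc_of_deriv_le (μ := (volume : Measure (EuclideanSpace ℝ (Fin d))))
        (F := fun z x => e z x * f x)
        (F' := fun z x => (-Complex.I * ((inner ℝ v x : ℝ) : ℂ)) * (e z x * f x))
        (x₀ := z₀)
        (bound := fun x => C * ‖v‖ * (‖x‖ ^ 1 * Real.exp (-((1 / C - 3 * δ * ‖v‖) * ‖x‖))))
        (s := Metric.ball z₀ δ) (hs := Metric.ball_mem_nhds z₀ hδ) ?_ ?_ ?_ ?_ ?_ ?_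
      · exact key.2.differentiableAt
      · filter_upwards with z
        exact ((hecont z).aestronglyMeasurable.mul hmeas.aestronglyMeasurable)
      · exact hF_int z₀ (by linarith)
      · apply AEStronglyMeasurable.mul _
          (((hecont z₀).aestronglyMeasurable.mul hmeas.aestronglyMeasurable))
        apply Continuous.aestronglyMeasurable
        exact continuous_const.mul
          (Complex.continuous_ofReal.comp (continuous_const.inner continuous_id))
      · filter_upwards [hdecay] with x hx
        intro z hzball
        have him : |z.im| < 3 * δ := by
          have h1 : |z.im - z₀.im| ≤ dist z z₀ := by
            rw [Complex.dist_eq]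
            exact (Complex.abs_im_le_norm (z - z₀))
          have h2 : dist z z₀ < δ := Metric.mem_ball.1 hzball
          have h3 : |z.im| ≤ |z₀.im| + |z.im - z₀.im| := by
            have := abs_add_le z₀.im (z.im - z₀.im)
            simpa using this
          linarith
        have hker := hkerbound (3 * δ * ‖v‖) z
          (by nlinarith [abs_nonneg z.im, hnv]) x
        rw [pow_zero, one_mul] at hker
        have h1 : ‖(-Complex.I * ((inner ℝ v x : ℝ) : ℂ)) * (e z x * f x)‖
            ≤ (‖v‖ * ‖x‖) * (Real.exp (3 * δ * ‖v‖ * ‖x‖) * (C * Real.exp (-‖x‖ / C))) := by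
          rw [norm_mul, norm_mul, norm_mul, norm_neg, Complex.norm_I, one_mul,
            Complex.norm_real, Real.norm_eq_abs]
          have h2 := abs_real_inner_le_norm v x
          gcongr
        refine h1.trans (le_of_eq ?_)
        have hexp : Real.exp (3 * δ * ‖v‖ * ‖x‖) * Real.exp (-‖x‖ / C)
            = Real.exp (-((1 / C - 3 * δ * ‖v‖) * ‖x‖)) := by
          rw [← Real.exp_add]
          congr 1
          field_simp
          ring
        rw [← hexp, pow_one]
        ring
      · exact ((integrable_pow_mul_exp d 1 (by linarith : (0:ℝ) < 1 / C - 3 * δ * ‖v‖)).const_mul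
          (C * ‖v‖))
      · filter_upwards with x
        intro z hzball
        have h1 : HasDerivAt (fun z : ℂ => ((inner ℝ ξ₀ x : ℝ) : ℂ) + z * ((inner ℝ v x : ℝ) : ℂ))
            ((inner ℝ v x : ℝ) : ℂ) z := by
          simpa using ((hasDerivAt_id z).mul_const ((inner ℝ v x : ℝ) : ℂ)).const_add
            ((inner ℝ ξ₀ x : ℝ) : ℂ)
        have h2 := h1.const_mul (-Complex.I)
        have h3 := h2.cexp
        have h4 := h3.mul_const (f x)
        refine h4.congr_deriv ?_
        rw [he]
        ring
    -- analyticity and identity theorem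
    have hS_open : IsOpen S := by
      have : S = (fun z : ℂ => |z.im|) ⁻¹' (Set.Iio (2 * δ)) := rfl
      rw [this]
      exact isOpen_Iio.preimage (Complex.continuous_im.abs)
    have hg_diffOn : DifferentiableOn ℂ g S :=
      fun z hz => (hg_deriv z hz).differentiableWithinAt
    have hg_an : AnalyticOnNhd ℂ g S := hg_diffOn.analyticOnNhd hS_open
    have hS_conv : Convex ℝ S := by
      have : S = {z : ℂ | z.im < 2 * δ} ∩ {z : ℂ | -(2 * δ) < z.im} := by
        ext z
        simp only [hSdef, Set.mem_setOf_eq, Set.mem_inter_iff, abs_lt]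
        tauto
      rw [this]
      exact (convex_halfSpace_im_lt (2 * δ)).inter (convex_halfSpace_im_gt (-(2 * δ)))
    have hS_preconn : IsPreconnected S := hS_conv.isPreconnected
    -- zeros on a real interval
    have hzero : ∀ t : ℝ, |t| * ‖v‖ < r → g (t : ℂ) = 0 := by
      intro t ht
      have hmem : ξ₀ + t • v ∈ Metric.ball ξ₀ r := by
        rw [Metric.mem_ball, dist_eq_norm, add_sub_cancel_left, norm_smul, Real.norm_eq_abs]
        exact ht
      have hFz : F (ξ₀ + t • v) = 0 := hball' _ hmem
      have hpt : ∀ x : EuclideanSpace ℝ (Fin d), ((inner ℝ (ξ₀ + t • v) x : ℝ) : ℂ)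
          = ((inner ℝ ξ₀ x : ℝ) : ℂ) + (t : ℂ) * ((inner ℝ v x : ℝ) : ℂ) := by
        intro x
        rw [inner_add_left, real_inner_smul_left]
        push_cast
        ring
      rw [hg]
      rw [hF] at hFz
      simp only at hFz ⊢
      rw [← hFz]
      congr 1
      funext x
      rw [he]
      simp only
      rw [hpt x]
    -- frequently zero near 0
    have hfreq : ∃ᶠ z in nhdsWithin (0 : ℂ) {(0 : ℂ)}ᶜ, g z = 0 := by
      rw [Filter.frequently_iff]
      intro U hU
      rw [Metric.mem_nhdsWithin_iff] at hU
      obtain ⟨ε, hε, hsub⟩ := hU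
      set t : ℝ := min (ε / 2) (r / (2 * ‖v‖)) with htdef
      have ht0 : 0 < t := by
        apply lt_min (by linarith)
        positivity
      refine ⟨(t : ℂ), hsub ⟨?_, ?_⟩, ?_⟩
      · rw [Metric.mem_ball, Complex.dist_eq, sub_zero, Complex.norm_real, Real.norm_eq_abs,
          abs_of_pos ht0]
        calc t ≤ ε / 2 := min_le_left _ _
          _ < ε := by linarith
      · simp only [Set.mem_compl_iff, Set.mem_singleton_iff]
        exact_mod_cast ht0.ne'
      · apply hzero
        rw [abs_of_pos ht0]
        calc t * ‖v‖ ≤ (r / (2 * ‖v‖)) * ‖v‖ := by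
              gcongr
              exact min_le_right _ _
          _ = r / 2 := by field_simp
          _ < r := by linarith
    have h0S : (0 : ℂ) ∈ S := by
      simp only [hSdef, Set.mem_setOf_eq, Complex.zero_im, abs_zero]
      positivity
    have hEqOn := hg_an.eqOn_zero_of_preconnected_of_frequently_eq_zero hS_preconn h0S hfreq
    have h1S : (1 : ℂ) ∈ S := by
      simp only [hSdef, Set.mem_setOf_eq, Complex.one_im, abs_zero]
      positivity
    have hg1 : g 1 = 0 := hEqOn h1S
    -- F ξ = g 1
    have hpt : ∀ x : EuclideanSpace ℝ (Fin d), ((inner ℝ ξ x : ℝ) : ℂ)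
        = ((inner ℝ ξ₀ x : ℝ) : ℂ) + (1 : ℂ) * ((inner ℝ v x : ℝ) : ℂ) := by
      intro x
      have : ξ = ξ₀ + v := by rw [hv]; abel
      rw [this, inner_add_left]
      push_cast
      ring
    rw [hF]
    simp only
    rw [← hg1, hg]
    congr 1
    funext x
    rw [he]
    simp only
    rw [hpt x]
  -- Step 2: the mathlib Fourier transform of f vanishes.
  have hFourier : 𝓕 f = 0 := by
    funext w
    rw [Real.fourier_eq']
    have hpt : ∀ x : EuclideanSpace ℝ (Fin d), Complex.exp (((-2 * Real.pi * (inner ℝ x w : ℝ) : ℝ) : ℂ) * Complex.I)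
        = Complex.exp (-Complex.I * ((inner ℝ ((2 * Real.pi) • w) x : ℝ) : ℂ)) := by
      intro x
      congr 1
      rw [real_inner_smul_left, real_inner_comm]
      push_cast
      ring
    have : (∫ x : EuclideanSpace ℝ (Fin d), Complex.exp (((-2 * Real.pi * (inner ℝ x w : ℝ) : ℝ) : ℂ) * Complex.I) • f x)
        = F ((2 * Real.pi) • w) := by
      rw [hF]
      simp only
      congr 1
      funext x
      rw [hpt x, smul_eq_mul]
    rw [this, hFzero]
    rfl
  -- Step 3: f = 0 a.e., contradiction.
  apply hne
  have hloc : LocallyIntegrable f (volume : Measure (EuclideanSpace ℝ (Fin d))) := hf_int.locallyIntegrable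
  have hae : ∀ᵐ x ∂(volume : Measure (EuclideanSpace ℝ (Fin d))), f x = 0 := by
    apply ae_eq_zero_of_integral_contDiff_smul_eq_zero hloc
    intro g hgsmooth hgsupp
    -- turn g into a complex-valued Schwartz function
    have hsmoothC : ContDiff ℝ ∞ (fun x : EuclideanSpace ℝ (Fin d) => ((g x : ℝ) : ℂ)) :=
      Complex.ofRealCLM.contDiff.comp hgsmooth
    have hsuppC : HasCompactSupport (fun x : EuclideanSpace ℝ (Fin d) => ((g x : ℝ) : ℂ)) :=
      hgsupp.comp_left (g := fun t : ℝ => (t : ℂ)) Complex.ofReal_zero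
    set G : 𝓢(EuclideanSpace ℝ (Fin d), ℂ) :=
      { toFun := fun x : EuclideanSpace ℝ (Fin d) => ((g x : ℝ) : ℂ)
        smooth' := hsmoothC
        decay' := by
          intro k n
          have hcont : Continuous
              (fun x : EuclideanSpace ℝ (Fin d) => ‖x‖ ^ k * ‖iteratedFDeriv ℝ n (fun x : EuclideanSpace ℝ (Fin d) => ((g x : ℝ) : ℂ)) x‖) := by
            apply Continuous.mul (continuous_norm.pow k)
            exact (hsmoothC.continuous_iteratedFDeriv (by
              exact_mod_cast le_top)).norm
          have hsupp2 : HasCompactSupport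
              (fun x : EuclideanSpace ℝ (Fin d) => ‖x‖ ^ k * ‖iteratedFDeriv ℝ n (fun x : EuclideanSpace ℝ (Fin d) => ((g x : ℝ) : ℂ)) x‖) := by
            apply HasCompactSupport.mul_left
            exact (hsuppC.iteratedFDeriv n).norm
          obtain ⟨M, hM⟩ := hcont.bounded_above_of_compact_support hsupp2
          refine ⟨M, fun x => ?_⟩
          have h5 := hM x
          rw [Real.norm_eq_abs] at h5
          exact (le_abs_self _).trans h5 } with hG
    set h : 𝓢(EuclideanSpace ℝ (Fin d), ℂ) := (FourierTransform.fourierCLE ℂ 𝓢(EuclideanSpace ℝ (Fin d), ℂ)).symm G with hh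
    have hFh : 𝓕 (⇑h) = ⇑G := by
      have h1 := FourierTransform.fourierCLE_apply (R := ℂ) h
      have h2 : (FourierTransform.fourierCLE ℂ 𝓢(EuclideanSpace ℝ (Fin d), ℂ)) h = G :=
        (FourierTransform.fourierCLE ℂ 𝓢(EuclideanSpace ℝ (Fin d), ℂ)).apply_symm_apply G
      rw [← SchwartzMap.fourier_coe, ← h1, h2]
    have hflip : (innerₗ (EuclideanSpace ℝ (Fin d))).flip = innerₗ (EuclideanSpace ℝ (Fin d)) := by
      apply LinearMap.ext
      intro x
      apply LinearMap.ext
      intro y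
      exact real_inner_comm x y
    have hmul : (∫ x : EuclideanSpace ℝ (Fin d), (𝓕 (⇑h)) x • f x) = ∫ x : EuclideanSpace ℝ (Fin d), h x • (𝓕 f) x := by
      have := VectorFourier.integral_fourierIntegral_smul_eq_flip
        (L := innerₗ (EuclideanSpace ℝ (Fin d)))
        (μ := (volume : Measure (EuclideanSpace ℝ (Fin d))))
        (ν := (volume : Measure (EuclideanSpace ℝ (Fin d))))
        (f := ⇑h) (g := f) Real.continuous_fourierChar continuous_inner
        h.integrable hf_int
      rw [hflip] at this
      exact this
    have hzero2 : (∫ x : EuclideanSpace ℝ (Fin d), G x • f x) = 0 := by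
      rw [← hFh, hmul, hFourier]
      simp
    have heq : (fun x : EuclideanSpace ℝ (Fin d) => g x • f x)
        = fun x : EuclideanSpace ℝ (Fin d) => G x • f x := by
      funext x
      show g x • f x = ((g x : ℝ) : ℂ) • f x
      simp [Complex.real_smul]
    rw [show (∫ x : EuclideanSpace ℝ (Fin d), g x • f x)
      = ∫ x : EuclideanSpace ℝ (Fin d), G x • f x from by rw [heq]]
    exact hzero2
  filter_upwards [hae] with x hx
  simpa using hx
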